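/- Let q(s) be a monic real Hurwitz stable polynomial of degree n and let p(s), r(s) be real polynomials with deg p = n, deg r ≤ n, and suppose Re[p(jω)/q(jω)] > 0 for all real ω. Then there exists δ₀ > 0 such that for all 0 < δ < δ₀ and all real ω, Re[(p(jω) + δ r(jω))/q(jω)] > 0, provided additionally that the leading coefficient behavior ensures positivity at infinity: specifically assume deg r < n or the leading coefficients of p and r are both positive. -/

import Mathlib

open Polynomial Complex Filter Topology

noncomputable def evalI (p : Polynomial ℝ) (ω : ℝ) : ℂ :=
  Polynomial.aeval ((ω : ℂ) * Complex.I) p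

def HurwitzStable (p : Polynomial ℝ) : Prop :=
  ∀ z : ℂ, Polynomial.aeval z p = 0 → z.re < 0

def SPR (p q : Polynomial ℝ) : Prop :=
  p.degree = q.degree ∧ HurwitzStable q ∧
    ∀ ω : ℝ, 0 < (evalI p ω / evalI q ω).re

lemma aux_tendsto_div_pow {L : Filter ℝ} (hL : Tendsto (fun ω : ℝ => |ω|) L atTop)
    (s : Polynomial ℂ) (n : ℕ) (hs : s.degree < (n : ℕ)) :
    Tendsto (fun ω : ℝ => Polynomial.eval ((ω : ℂ) * Complex.I) s / ((ω : ℂ) * Complex.I) ^ n)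
      L (𝓝 0) := by
  by_cases h0 : s = 0
  · simpa [h0] using tendsto_const_nhds
  have hnd : s.natDegree < n := (natDegree_lt_iff_degree_lt h0).2 hs
  have key : ∀ ω : ℝ, Polynomial.eval ((ω : ℂ) * Complex.I) s / ((ω : ℂ) * Complex.I) ^ n =
      ∑ i ∈ Finset.range n, s.coeff i * ((ω : ℂ) * Complex.I) ^ i / ((ω : ℂ) * Complex.I) ^ n := by
    intro ω
    rw [Polynomial.eval_eq_sum_range' hnd, Finset.sum_div]
  simp only [key]
  have : (0 : ℂ) = ∑ i ∈ Finset.range n, 0 := by simp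
  rw [this]
  apply tendsto_finset_sum
  intro i hi
  have hin : i < n := Finset.mem_range.1 hi
  apply squeeze_zero_norm' (a := fun ω : ℝ => ‖s.coeff i‖ * (|ω| ^ (n - i))⁻¹)
  · filter_upwards [hL.eventually (eventually_ge_atTop 1)] with ω hω
    have hωpos : (0 : ℝ) < |ω| := lt_of_lt_of_le one_pos hω
    have hnorm : ‖(ω : ℂ) * Complex.I‖ = |ω| := by
      simp [Complex.norm_real]
    rw [norm_div, norm_mul, norm_pow, norm_pow, hnorm]

    have hsplit : |ω| ^ n = |ω| ^ i * |ω| ^ (n - i) := by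
      rw [← pow_add]; congr 1; omega
    rw [hsplit, mul_div_assoc]
    rw [div_mul_eq_div_div, div_self (by positivity), one_div]
  · have h1 : Tendsto (fun ω : ℝ => |ω| ^ (n - i)) L atTop :=
      (tendsto_pow_atTop (by omega)).comp hL
    have h2 : Tendsto (fun ω : ℝ => (|ω| ^ (n - i))⁻¹) L (𝓝 0) := h1.inv_tendsto_atTop
    simpa using (tendsto_const_nhds (x := ‖s.coeff i‖)).mul h2

lemma aux_tendsto_evalI_div {L : Filter ℝ} (hL : Tendsto (fun ω : ℝ => |ω|) L atTop)
    (s q : Polynomial ℝ) (n : ℕ) (hq : q.Monic) (hqdeg : q.natDegree = n)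
    (hqne : ∀ ω : ℝ, evalI q ω ≠ 0) (hsdeg : s.natDegree ≤ n) :
    Tendsto (fun ω : ℝ => (evalI s ω / evalI q ω)) L (𝓝 ((s.coeff n : ℂ))) := by
  set Z : ℝ → ℂ := fun ω => (ω : ℂ) * Complex.I with hZ
  set P : Polynomial ℂ := s.map (algebraMap ℝ ℂ) with hP
  set Q : Polynomial ℂ := q.map (algebraMap ℝ ℂ) with hQ
  set a : ℂ := (s.coeff n : ℂ) with ha
  have hQm : Q.Monic := hq.map _
  have hQdeg : Q.natDegree = n := by rw [hQ, q.natDegree_map_eq_of_injective (algebraMap ℝ ℂ).injective, hqdeg]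
  have hQcoeff : ∀ m : ℕ, n ≤ m → Q.coeff m = if m = n then 1 else 0 := by
    intro m hm
    rcases eq_or_lt_of_le hm with h | h
    · simp [← h, ← hQdeg, hQm.coeff_natDegree]
    · rw [if_neg (by omega)]
      exact Polynomial.coeff_eq_zero_of_natDegree_lt (by omega)
  have hPcoeff : ∀ m : ℕ, n ≤ m → P.coeff m = if m = n then a else 0 := by
    intro m hm
    rcases eq_or_lt_of_le hm with h | h
    · simp [← h, hP, ha, Polynomial.coeff_map]
    · rw [if_neg (by omega), hP, Polynomial.coeff_map,
        Polynomial.coeff_eq_zero_of_natDegree_lt (by omega)]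
      simp
  have hSdeg : (P - Polynomial.C a * Q).degree < (n : ℕ) := by
    rw [Polynomial.degree_lt_iff_coeff_zero]
    intro m hm
    rw [Polynomial.coeff_sub, Polynomial.coeff_C_mul, hPcoeff m hm, hQcoeff m hm]
    split <;> simp
  have hXdeg : (Q - Polynomial.X ^ n).degree < (n : WithBot ℕ) := by
    rw [Polynomial.degree_lt_iff_coeff_zero]
    intro m hm
    rw [Polynomial.coeff_sub, Polynomial.coeff_X_pow, hQcoeff m hm]
    simp
  have hevalI : ∀ (t : Polynomial ℝ) (ω : ℝ),
      evalI t ω = Polynomial.eval (Z ω) (t.map (algebraMap ℝ ℂ)) := by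
    intro t ω
    rw [evalI, Polynomial.aeval_def, Polynomial.eval_map]
  have hQZ : ∀ ω : ℝ, Polynomial.eval (Z ω) Q ≠ 0 := by
    intro ω; rw [← hevalI]; exact hqne ω
  have hZe : ∀ᶠ ω : ℝ in L, Z ω ≠ 0 := by
    filter_upwards [hL.eventually (eventually_ge_atTop 1)] with ω hω
    have hω0 : ω ≠ 0 := by intro h; rw [h] at hω; norm_num at hω
    exact mul_ne_zero (Complex.ofReal_ne_zero.2 hω0) Complex.I_ne_zero
  have h1 := aux_tendsto_div_pow hL (P - Polynomial.C a * Q) n hSdeg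
  have h2 := aux_tendsto_div_pow hL (Q - Polynomial.X ^ n) n hXdeg
  have h3 : Tendsto (fun ω : ℝ => Polynomial.eval (Z ω) Q / (Z ω) ^ n) L (𝓝 1) := by
    have := h2.add (tendsto_const_nhds (x := (1 : ℂ)))
    rw [zero_add] at this
    apply this.congr'
    filter_upwards [hZe] with ω hω
    have hzn : (Z ω) ^ n ≠ 0 := pow_ne_zero _ hω
    simp only [hZ] at hzn ⊢
    rw [Polynomial.eval_sub, Polynomial.eval_pow, Polynomial.eval_X, sub_div, div_self hzn]
    ring
  have h4 : Tendsto (fun ω : ℝ => (Z ω) ^ n / Polynomial.eval (Z ω) Q) L (𝓝 1) := by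
    have := (h3.inv₀ one_ne_zero)
    rw [inv_one] at this
    apply this.congr'
    filter_upwards with ω
    rw [← one_div, div_div_eq_mul_div, one_mul]
  have h5 := h1.mul h4
  rw [zero_mul] at h5
  have h6 := (tendsto_const_nhds (x := a)).add h5
  rw [add_zero] at h6
  apply h6.congr'
  filter_upwards [hZe] with ω hω
  have hzn : (Z ω) ^ n ≠ 0 := pow_ne_zero _ hω
  have hq' := hQZ ω
  simp only [hevalI]
  rw [Polynomial.eval_sub, Polynomial.eval_mul, Polynomial.eval_C]
  rw [← hQ, ← hP]
  field_simp
  simp only [hZ] at hzn ⊢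
  rw [mul_div_assoc, div_self hzn]
  ring

theorem re_pos_perturbation (n : ℕ) (p q r : Polynomial ℝ)
    (hqmon : q.Monic) (hqdeg : q.natDegree = n) (hqH : HurwitzStable q)
    (hpdeg : p.natDegree = n) (hrdeg : r.natDegree ≤ n)
    (hpos : ∀ ω : ℝ, 0 < (evalI p ω / evalI q ω).re)
    (hlead : r.natDegree < n ∨ (0 < p.leadingCoeff ∧ 0 < r.leadingCoeff)) :
    ∃ δ₀ > (0 : ℝ), ∀ δ : ℝ, 0 < δ → δ < δ₀ → ∀ ω : ℝ,
      0 < ((evalI p ω + (δ : ℂ) * evalI r ω) / evalI q ω).re := by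
  -- q never vanishes on the imaginary axis
  have hqne : ∀ ω : ℝ, evalI q ω ≠ 0 := by
    intro ω h
    have := hqH _ h
    simp at this
  set F : ℝ → ℝ := fun ω => (evalI p ω / evalI q ω).re with hF
  set G : ℝ → ℝ := fun ω => (evalI r ω / evalI q ω).re with hG
  have hcont : ∀ t : Polynomial ℝ, Continuous (fun ω : ℝ => evalI t ω) := by
    intro t
    exact (Polynomial.continuous_aeval t).comp (by continuity)
  have hcontF : Continuous F :=
    Complex.continuous_re.comp ((hcont p).div (hcont q) hqne)
  have hcontG : Continuous G :=
    Complex.continuous_re.comp ((hcont r).div (hcont q) hqne)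
  have hp0 : p ≠ 0 := by
    intro h
    have := hpos 0
    rw [h] at this
    simp [evalI] at this
  set a : ℝ := p.coeff n with ha2
  have halead : a = p.leadingCoeff := by rw [Polynomial.leadingCoeff, hpdeg]
  set b : ℝ := r.coeff n with hb
  have hb0 : 0 ≤ b := by
    rcases lt_or_eq_of_le hrdeg with h | h
    · rw [hb, Polynomial.coeff_eq_zero_of_natDegree_lt h]
    · rcases hlead with h' | h'
      · omega
      · rw [hb, ← h, ← Polynomial.leadingCoeff]; exact le_of_lt h'.2
  have habs_top : Tendsto (fun ω : ℝ => |ω|) atTop atTop := tendsto_abs_atTop_atTop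
  have habs_bot : Tendsto (fun ω : ℝ => |ω|) atBot atTop := tendsto_abs_atBot_atTop
  have hFtop : Tendsto F atTop (𝓝 a) := by
    have := (Complex.continuous_re.tendsto _).comp
      (aux_tendsto_evalI_div habs_top p q n hqmon hqdeg hqne (le_of_eq hpdeg))
    exact this
  have hFbot : Tendsto F atBot (𝓝 a) := by
    have := (Complex.continuous_re.tendsto _).comp
      (aux_tendsto_evalI_div habs_bot p q n hqmon hqdeg hqne (le_of_eq hpdeg))
    exact this
  have hGtop : Tendsto G atTop (𝓝 b) := by
    have := (Complex.continuous_re.tendsto _).comp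
      (aux_tendsto_evalI_div habs_top r q n hqmon hqdeg hqne hrdeg)
    exact this
  have hGbot : Tendsto G atBot (𝓝 b) := by
    have := (Complex.continuous_re.tendsto _).comp
      (aux_tendsto_evalI_div habs_bot r q n hqmon hqdeg hqne hrdeg)
    exact this
  have ha0 : 0 < a := by
    have h1 : 0 ≤ a := ge_of_tendsto hFtop (by
      filter_upwards with ω
      exact le_of_lt (hpos ω))
    have h2 : a ≠ 0 := by
      rw [halead]
      exact Polynomial.leadingCoeff_ne_zero.2 hp0
    exact lt_of_le_of_ne h1 (Ne.symm h2)
  -- tail bounds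
  have hEtop : ∀ᶠ ω in atTop, a / 2 < F ω ∧ -(a / 2) < G ω := by
    filter_upwards [hFtop.eventually (eventually_gt_nhds (show a/2 < a by linarith)),
      hGtop.eventually (eventually_gt_nhds (show -(a/2) < b by linarith))] with ω h1 h2
    exact ⟨h1, h2⟩
  have hEbot : ∀ᶠ ω in atBot, a / 2 < F ω ∧ -(a / 2) < G ω := by
    filter_upwards [hFbot.eventually (eventually_gt_nhds (show a/2 < a by linarith)),
      hGbot.eventually (eventually_gt_nhds (show -(a/2) < b by linarith))] with ω h1 h2
    exact ⟨h1, h2⟩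
  obtain ⟨R₁, hR₁⟩ := eventually_atTop.1 hEtop
  obtain ⟨R₂, hR₂⟩ := eventually_atBot.1 hEbot
  set lo : ℝ := min R₂ 0 with hlo
  set hi : ℝ := max R₁ 0 with hhi
  have hloRange : lo ≤ hi := le_trans (min_le_right _ _) (le_max_right _ _)
  have h0mem : (0 : ℝ) ∈ Set.Icc lo hi := ⟨min_le_right _ _, le_max_right _ _⟩
  obtain ⟨ω₀, hω₀K, hminF⟩ :=
    isCompact_Icc.exists_isMinOn (Set.nonempty_of_mem h0mem) hcontF.continuousOn
  obtain ⟨ω₁, hω₁K, hmaxG⟩ :=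
    isCompact_Icc.exists_isMaxOn (Set.nonempty_of_mem h0mem)
      (continuous_abs.comp hcontG).continuousOn
  set m : ℝ := F ω₀ with hm
  have hm0 : 0 < m := hpos ω₀
  set M : ℝ := |G ω₁| with hM
  have hM0 : 0 ≤ M := abs_nonneg _
  refine ⟨min 1 (m / (M + 1)), lt_min one_pos (by positivity), ?_⟩
  intro δ hδ0 hδ ω
  have hδ1 : δ < 1 := lt_of_lt_of_le hδ (min_le_left _ _)
  have hδm : δ * (M + 1) < m := by
    have := lt_of_lt_of_le hδ (min_le_right _ _)
    calc δ * (M + 1) < m / (M + 1) * (M + 1) := by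
          apply mul_lt_mul_of_pos_right this (by linarith)
      _ = m := by field_simp
  have hkey : ((evalI p ω + (δ : ℂ) * evalI r ω) / evalI q ω).re = F ω + δ * G ω := by
    rw [add_div, mul_div_assoc, Complex.add_re, Complex.re_ofReal_mul]
  rw [hkey]
  by_cases hωK : ω ∈ Set.Icc lo hi
  · have h1 : m ≤ F ω := hminF hωK
    have h2 : |G ω| ≤ M := hmaxG hωK
    have h3 : -M ≤ G ω := neg_le_of_abs_le h2
    nlinarith
  · have : a / 2 < F ω ∧ -(a / 2) < G ω := by
      rcases lt_or_ge ω lo with h | h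
      · exact hR₂ ω (le_of_lt (lt_of_lt_of_le h (min_le_left _ _)))
      · rcases lt_or_ge hi ω with h' | h'
        · exact hR₁ ω (le_of_lt (lt_of_le_of_lt (le_max_left _ _) h'))
        · exact absurd ⟨h, h'⟩ hωK
    obtain ⟨h1, h2⟩ := this
    nlinarith
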